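/- Let Ω ⊆ ℝ³ be an open set, x ∈ Ω, and σ ⊆ ℝ³ a compact set of Lebesgue measure zero. Fix j ∈ {1,2,3} and set Φ(z) = ∂G/∂z_j (z − x), the j-th partial derivative of G evaluated at z − x. Let (v_n) be a sequence of measurable functions on Ω such that ∫_K (v_n − Φ)² dz → 0 as n → ∞ for every compact set K ⊆ Ω ∖ σ. Then for every finite open cone V with vertex at x, i.e. V = {z ∈ ℝ³ : ⟪z − x, a⟫ > ‖z − x‖·cos Θ} ∩ B(x,R) with a a unit vector, Θ ∈ (0, π/2) and R > 0, one has ∫_{V ∩ Ω} v_n² dz → +∞ as n → ∞. (Proposition 3.1(a), stated with the defining convergence property of a needle sequence as hypothesis.) -/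

import Mathlib

open MeasureTheory Filter
open scoped ENNReal Topology

set_option maxHeartbeats 1000000

private lemma abs_apply_le_norm' (u : EuclideanSpace ℝ (Fin 3)) (i : Fin 3) : |u i| ≤ ‖u‖ := by
  have h := abs_real_inner_le_norm u (EuclideanSpace.single i (1:ℝ))
  rw [EuclideanSpace.inner_single_right] at h
  simpa using h

theorem prop31a (Ω : Set (EuclideanSpace ℝ (Fin 3))) (hΩ : IsOpen Ω)
    (x : EuclideanSpace ℝ (Fin 3)) (hx : x ∈ Ω)
    (σ : Set (EuclideanSpace ℝ (Fin 3))) (hσc : IsCompact σ) (hσ0 : volume σ = 0)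
    (j : Fin 3) (Φ : EuclideanSpace ℝ (Fin 3) → ℝ)
    (hΦ : ∀ z, Φ z = -((z - x) j) / (4 * Real.pi * ‖z - x‖ ^ 3))
    (v : ℕ → EuclideanSpace ℝ (Fin 3) → ℝ) (hmeas : ∀ n, Measurable (v n))
    (hconv : ∀ K : Set (EuclideanSpace ℝ (Fin 3)), K ⊆ Ω \ σ → IsCompact K →
      Tendsto (fun n => ∫ z in K, (v n z - Φ z) ^ 2) atTop (𝓝 0))
    (a : EuclideanSpace ℝ (Fin 3)) (ha : ‖a‖ = 1)
    (Θ : ℝ) (hΘ : Θ ∈ Set.Ioo 0 (Real.pi / 2)) (R : ℝ) (hR : 0 < R) :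
    Tendsto
      (fun n => ∫⁻ z in
        (({z | (inner ℝ (z - x) a : ℝ) > ‖z - x‖ * Real.cos Θ} ∩ Metric.ball x R) ∩ Ω),
        ENNReal.ofReal ((v n z) ^ 2))
      atTop (𝓝 ⊤) := by
  obtain ⟨hΘ0, hΘ2⟩ := hΘ
  have hπ : 0 < Real.pi := Real.pi_pos
  set c : ℝ := Real.cos Θ with hcdef
  have hc0 : 0 < c := Real.cos_pos_of_mem_Ioo ⟨by linarith, hΘ2⟩
  have hc1 : c < 1 := by
    have h := Real.cos_lt_cos_of_nonneg_of_le_pi le_rfl (by linarith) hΘ0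
    simpa using h
  -- measurability / continuity of Φ
  have hcoord : Continuous fun z : EuclideanSpace ℝ (Fin 3) => (z - x) j := by
    have h1 : Continuous fun u : EuclideanSpace ℝ (Fin 3) => u j := PiLp.continuous_apply (p := 2) (β := fun _ : Fin 3 => ℝ) j
    exact h1.comp (continuous_id.sub continuous_const)
  have hden : Continuous fun z : EuclideanSpace ℝ (Fin 3) => 4 * Real.pi * ‖z - x‖ ^ 3 :=
    continuous_const.mul ((continuous_id.sub continuous_const).norm.pow 3)
  have hΦeq : Φ = fun z => -((z - x) j) / (4 * Real.pi * ‖z - x‖ ^ 3) := funext hΦ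
  have hΦm : Measurable Φ := by
    rw [hΦeq]; exact hcoord.neg.measurable.div hden.measurable
  -- direction vector with nonzero j-th coordinate
  obtain ⟨w, hw1, hwa, hwj⟩ :
      ∃ w : EuclideanSpace ℝ (Fin 3), ‖w‖ = 1 ∧ c < (inner ℝ w a : ℝ) ∧ w j ≠ 0 := by
    by_cases haj : a j = 0
    · set ε : ℝ := min 1 (1 - c) with hε
      have hε0 : 0 < ε := lt_min one_pos (by linarith)
      have hε1 : ε ≤ 1 := min_le_left _ _
      have hε2 : ε ≤ 1 - c := min_le_right _ _
      set e : EuclideanSpace ℝ (Fin 3) := EuclideanSpace.single j (1:ℝ) with he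
      have hae : (inner ℝ a e : ℝ) = 0 := by
        rw [he, EuclideanSpace.inner_single_right]; simpa using haj
      have hea : (inner ℝ e a : ℝ) = 0 := by rw [real_inner_comm]; exact hae
      set b : EuclideanSpace ℝ (Fin 3) := a + ε • e with hb
      have hbsq : ‖b‖ ^ 2 = 1 + ε ^ 2 := by
        rw [hb, norm_add_sq_real, real_inner_smul_right, hae, norm_smul, he,
          EuclideanSpace.norm_single, ha]
        simp [abs_of_pos hε0]
      have hbpos : 0 < ‖b‖ := by nlinarith [norm_nonneg b]
      have hbne : b ≠ 0 := by
        intro h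
        rw [h, norm_zero] at hbpos
        exact lt_irrefl _ hbpos
      have hib : (inner ℝ b a : ℝ) = 1 := by
        rw [hb, inner_add_left, real_inner_smul_left, hea,
          real_inner_self_eq_norm_sq, ha]
        ring
      refine ⟨‖b‖⁻¹ • b, norm_smul_inv_norm hbne, ?_, ?_⟩
      · rw [real_inner_smul_left, hib, mul_one]
        have hεsq : ε ^ 2 ≤ 1 - c := by nlinarith
        have h1 : c ^ 2 * ‖b‖ ^ 2 < 1 := by
          rw [hbsq]
          nlinarith [mul_le_mul_of_nonneg_left hεsq (sq_nonneg c),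
            mul_pos (sub_pos.2 hc1) (show (0:ℝ) < 1 + c - c ^ 2 by nlinarith)]
        have h2 : c * ‖b‖ < 1 := by nlinarith [mul_pos hc0 hbpos]
        nlinarith [mul_inv_cancel₀ hbpos.ne']
      · have hbj : b j = ε := by
          rw [hb]
          simp [he, EuclideanSpace.single_apply, haj]
        show (‖b‖⁻¹ • b) j ≠ 0
        rw [PiLp.smul_apply, hbj, smul_eq_mul]
        exact mul_ne_zero (inv_ne_zero hbpos.ne') hε0.ne'
    · refine ⟨a, ha, ?_, haj⟩
      rw [real_inner_self_eq_norm_sq, ha]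
      simpa using hc1
  set ip : ℝ := (inner ℝ w a : ℝ) with hipdef
  have hipc : c < ip := hwa
  set m : ℝ := |w j| / 2 with hm
  have hm0 : 0 < m := by
    have : 0 < |w j| := abs_pos.2 hwj
    rw [hm]; linarith
  set δ : ℝ := min (1/4) (min m ((ip - c)/4)) with hδdef
  have hδ0 : 0 < δ := lt_min (by norm_num) (lt_min hm0 (by linarith))
  have hδ1 : δ ≤ 1/4 := min_le_left _ _
  have hδm : δ ≤ m := (min_le_right _ _).trans (min_le_left _ _)
  have hδc : δ ≤ (ip - c)/4 := (min_le_right _ _).trans (min_le_right _ _)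
  have hkey : ∀ t : ℝ, 0 < t → ∀ z ∈ Metric.ball (x + t • w) (t * δ),
      (t * (3/4) < ‖z - x‖ ∧ ‖z - x‖ < t * (5/4)) ∧ t * m ≤ |(z - x) j| ∧
        ‖z - x‖ * c < (inner ℝ (z - x) a : ℝ) := by
    intro t ht z hz
    set d : EuclideanSpace ℝ (Fin 3) := z - x - t • w with hd
    have hdn : ‖d‖ < t * δ := by
      rw [Metric.mem_ball, dist_eq_norm] at hz
      calc ‖d‖ = ‖z - (x + t • w)‖ := by rw [hd]; congr 1; abel
        _ < t * δ := hz
    have hzx : z - x = t • w + d := by rw [hd]; abel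
    have htw : ‖t • w‖ = t := by
      rw [norm_smul, hw1, Real.norm_eq_abs, abs_of_pos ht, mul_one]
    have hub : ‖z - x‖ ≤ t + ‖d‖ := by
      calc ‖z - x‖ = ‖t • w + d‖ := by rw [hzx]
        _ ≤ ‖t • w‖ + ‖d‖ := norm_add_le _ _
        _ = t + ‖d‖ := by rw [htw]
    have hlb : t - ‖d‖ ≤ ‖z - x‖ := by
      have h2 : ‖t • w‖ ≤ ‖z - x‖ + ‖d‖ := by
        calc ‖t • w‖ = ‖(z - x) - d‖ := by rw [hzx]; congr 1; abel
          _ ≤ ‖z - x‖ + ‖d‖ := norm_sub_le _ _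
      rw [htw] at h2; linarith
    have htδ : t * δ ≤ t * (1/4) := mul_le_mul_of_nonneg_left hδ1 ht.le
    refine ⟨⟨by nlinarith, by nlinarith⟩, ?_, ?_⟩
    · have hj : (z - x) j = t * w j + d j := by
        rw [hzx]; simp
      have hdj : |d j| ≤ ‖d‖ := abs_apply_le_norm' d j
      have h3 : |t * w j| ≤ |(z - x) j| + |d j| := by
        rw [hj]
        calc |t * w j| = |(t * w j + d j) - d j| := by congr 1; ring
          _ ≤ |t * w j + d j| + |d j| := abs_sub _ _
      have h5 : |t * w j| = t * |w j| := by
        rw [abs_mul, abs_of_pos ht]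
      have htδm : t * δ ≤ t * m := mul_le_mul_of_nonneg_left hδm ht.le
      have hwm : t * |w j| = 2 * (t * m) := by rw [hm]; ring
      rw [h5, hwm] at h3
      linarith
    · have hinner : (inner ℝ (z - x) a : ℝ) = t * ip + (inner ℝ d a : ℝ) := by
        rw [hzx, inner_add_left, real_inner_smul_left, hipdef]
      have hda : |(inner ℝ d a : ℝ)| ≤ ‖d‖ := by
        have h6 := abs_real_inner_le_norm d a
        rwa [ha, mul_one] at h6
      rw [hinner]
      have h7 := abs_le.mp hda
      have htδc : t * δ ≤ t * ((ip - c)/4) := mul_le_mul_of_nonneg_left hδc ht.le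
      nlinarith [mul_le_mul_of_nonneg_right hub hc0.le, mul_pos ht hδ0,
        mul_lt_mul_of_pos_right hdn hc0]
  obtain ⟨ρ, hρ0, hρΩ⟩ : ∃ ρ > 0, Metric.ball x ρ ⊆ Ω := Metric.isOpen_iff.mp hΩ x hx
  set t₀ : ℝ := min R ρ / 2 with ht₀def
  have ht₀0 : 0 < t₀ := div_pos (lt_min hR hρ0) two_pos
  have ht₀R : (5/4) * t₀ < R := by
    have h1 : min R ρ ≤ R := min_le_left _ _
    rw [ht₀def]; linarith
  have ht₀ρ : (5/4) * t₀ < ρ := by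
    have h1 : min R ρ ≤ ρ := min_le_right _ _
    rw [ht₀def]; linarith
  set tt : ℕ → ℝ := fun k => t₀ / 2 ^ k with httdef
  have htt0 : ∀ k, 0 < tt k := fun k => div_pos ht₀0 (by positivity)
  have httle : ∀ k, tt k ≤ t₀ := by
    intro k
    rw [httdef]
    apply div_le_self ht₀0.le
    exact one_le_pow₀ (by norm_num)
  have htthalf : ∀ k l : ℕ, k < l → tt l ≤ tt k / 2 := by
    intro k l h
    have h1 : (2:ℝ) ^ (k+1) ≤ 2 ^ l := pow_le_pow_right₀ (by norm_num) h
    have h2 : t₀ / 2 ^ l ≤ t₀ / 2 ^ (k+1) :=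
      div_le_div_of_nonneg_left ht₀0.le (by positivity) h1
    calc tt l = t₀ / 2 ^ l := rfl
      _ ≤ t₀ / 2 ^ (k+1) := h2
      _ = tt k / 2 := by rw [httdef]; simp [pow_succ]; ring
  set A : ℕ → Set (EuclideanSpace ℝ (Fin 3)) :=
    fun k => Metric.ball (x + tt k • w) (tt k * δ) with hAdef
  set S : Set (EuclideanSpace ℝ (Fin 3)) :=
    ({z | (inner ℝ (z - x) a : ℝ) > ‖z - x‖ * c} ∩ Metric.ball x R) ∩ Ω with hSdef
  have hAS : ∀ k, A k ⊆ S := by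
    intro k z hz
    obtain ⟨⟨hn1, hn2⟩, _, hci⟩ := hkey (tt k) (htt0 k) z hz
    have h1 : tt k ≤ t₀ := httle k
    refine ⟨⟨hci, ?_⟩, ?_⟩
    · rw [Metric.mem_ball, dist_eq_norm]
      nlinarith [htt0 k]
    · apply hρΩ
      rw [Metric.mem_ball, dist_eq_norm]
      nlinarith [htt0 k]
  have hAdisj : Pairwise (Function.onFun Disjoint A) := by
    have key : ∀ k l : ℕ, k < l → Disjoint (A k) (A l) := by
      intro k l h
      rw [Set.disjoint_left]
      intro z hzk hzl
      obtain ⟨⟨h1, _⟩, _, _⟩ := hkey (tt k) (htt0 k) z hzk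
      obtain ⟨⟨_, h2⟩, _, _⟩ := hkey (tt l) (htt0 l) z hzl
      have h3 := htthalf k l h
      nlinarith [htt0 k, htt0 l]
    intro k l h
    rcases h.lt_or_gt with h | h
    · exact key k l h
    · exact (key l k h).symm
  set ν : ℝ≥0∞ := volume (Metric.ball (0 : EuclideanSpace ℝ (Fin 3)) 1) with hνdef
  have hν0 : ν ≠ 0 := (Metric.measure_ball_pos volume 0 one_pos).ne'
  set C : ℝ := m ^ 2 / (16 * Real.pi ^ 2 * (5/4) ^ 6) with hCdef
  have hC0 : 0 < C := by rw [hCdef]; positivity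
  set κ : ℝ≥0∞ := ENNReal.ofReal (C * δ ^ 3 / t₀) * ν with hκdef
  have hκ0 : κ ≠ 0 := by
    rw [hκdef]
    apply mul_ne_zero _ hν0
    apply ne_of_gt
    rw [ENNReal.ofReal_pos]
    positivity
  have hmain : ∀ k, κ ≤ ∫⁻ z in A k, ENNReal.ofReal (Φ z ^ 2) := by
    intro k
    have ht : 0 < tt k := htt0 k
    set t : ℝ := tt k with htdef
    have hpt : ∀ z ∈ A k, ENNReal.ofReal (C / t ^ 4) ≤ ENNReal.ofReal (Φ z ^ 2) := by
      intro z hz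
      apply ENNReal.ofReal_le_ofReal
      obtain ⟨⟨h1, h2⟩, hj, _⟩ := hkey t ht z hz
      have hnz : 0 < ‖z - x‖ := by nlinarith
      have hΦ2 : Φ z ^ 2 = ((z - x) j) ^ 2 / (16 * Real.pi ^ 2 * ‖z - x‖ ^ 6) := by
        rw [hΦ, div_pow, neg_sq]
        congr 1
        ring
      rw [hΦ2]
      have hnum : (t * m) ^ 2 ≤ ((z - x) j) ^ 2 := by
        rw [← sq_abs ((z - x) j)]
        apply pow_le_pow_left₀ (by positivity) hj
      have hden6 : 16 * Real.pi ^ 2 * ‖z - x‖ ^ 6 ≤ 16 * Real.pi ^ 2 * (t * (5/4)) ^ 6 := by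
        apply mul_le_mul_of_nonneg_left _ (by positivity)
        exact pow_le_pow_left₀ hnz.le h2.le 6
      calc C / t ^ 4 = (t * m) ^ 2 / (16 * Real.pi ^ 2 * (t * (5/4)) ^ 6) := by
            rw [hCdef]; field_simp
        _ ≤ ((z - x) j) ^ 2 / (16 * Real.pi ^ 2 * ‖z - x‖ ^ 6) :=
            div_le_div₀ (sq_nonneg _) hnum (by positivity) hden6
    have hvol : volume (A k) = ENNReal.ofReal ((t * δ) ^ 3) * ν := by
      rw [hAdef]
      rw [Measure.addHaar_ball volume _ (by positivity : (0:ℝ) ≤ t * δ),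
        finrank_euclideanSpace_fin]
    calc κ ≤ ENNReal.ofReal (C / t ^ 4) * volume (A k) := by
          rw [hvol, hκdef, ← mul_assoc, ← ENNReal.ofReal_mul (by positivity)]
          apply mul_le_mul_left (ENNReal.ofReal_le_ofReal _) ν
          rw [show C / t ^ 4 * (t * δ) ^ 3 = C * δ ^ 3 / t by field_simp]
          apply div_le_div_of_nonneg_left (by positivity) ht (httle k)
      _ = ∫⁻ _ in A k, ENNReal.ofReal (C / t ^ 4) := (setLIntegral_const _ _).symm
      _ ≤ ∫⁻ z in A k, ENNReal.ofReal (Φ z ^ 2) := setLIntegral_mono' measurableSet_ball hpt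
  have hStop : ∫⁻ z in S, ENNReal.ofReal (Φ z ^ 2) = ⊤ := by
    refine top_unique ?_
    calc (⊤:ℝ≥0∞) = ∑' _ : ℕ, κ := (ENNReal.tsum_const_eq_top_of_ne_zero hκ0).symm
      _ ≤ ∑' k, ∫⁻ z in A k, ENNReal.ofReal (Φ z ^ 2) := ENNReal.tsum_le_tsum hmain
      _ = ∫⁻ z in ⋃ k, A k, ENNReal.ofReal (Φ z ^ 2) :=
          (lintegral_iUnion (fun k => measurableSet_ball) hAdisj _).symm
      _ ≤ ∫⁻ z in S, ENNReal.ofReal (Φ z ^ 2) := lintegral_mono_set (Set.iUnion_subset hAS)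
  set U : Set (EuclideanSpace ℝ (Fin 3)) := S \ σ with hUdef
  have hxS : x ∉ S := by
    intro hxs
    have h := hxs.1.1
    simp only [Set.mem_setOf_eq, sub_self, inner_zero_left, norm_zero, zero_mul] at h
    exact lt_irrefl _ h
  have hUS : U ⊆ S := Set.diff_subset
  have hUopen : IsOpen U := by
    apply IsOpen.sdiff _ hσc.isClosed
    apply IsOpen.inter _ hΩ
    apply IsOpen.inter _ Metric.isOpen_ball
    exact isOpen_lt ((continuous_id.sub continuous_const).norm.mul continuous_const)
      ((continuous_id.sub continuous_const).inner continuous_const)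
  have hUvol : ∫⁻ z in U, ENNReal.ofReal (Φ z ^ 2) = ⊤ := by
    have hae : U =ᵐ[volume] S := by
      rw [ae_eq_set]
      constructor
      · have h0 : U \ S = (∅ : Set (EuclideanSpace ℝ (Fin 3))) := by
          apply Set.eq_empty_iff_forall_notMem.2
          intro z hz
          exact hz.2 hz.1.1
        rw [h0, measure_empty]
      · apply measure_mono_null _ hσ0
        intro z hz
        by_contra hzσ
        exact hz.2 ⟨hz.1, hzσ⟩
    rw [setLIntegral_congr hae]
    exact hStop
  have hUx : ∀ z ∈ U, z ≠ x := fun z hz h => hxS (h ▸ hUS hz)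
  have hΦcont : ContinuousOn Φ U := by
    rw [hΦeq]
    apply ContinuousOn.div hcoord.neg.continuousOn hden.continuousOn
    intro z hz
    have h1 : z - x ≠ 0 := sub_ne_zero.2 (hUx z hz)
    have h2 : 0 < ‖z - x‖ := norm_pos_iff.2 h1
    positivity
  -- compact exhaustion of U
  set K : ℕ → Set (EuclideanSpace ℝ (Fin 3)) :=
    fun n => Metric.closedBall x (n+1) ∩ {z | 1/(n+1) ≤ Metric.infDist z Uᶜ} with hKdef
  have hKc : ∀ n, IsCompact (K n) := by
    intro n
    exact (isCompact_closedBall x _).inter_right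
      (isClosed_le continuous_const (Metric.continuous_infDist_pt _))
  have hKU : ∀ n, K n ⊆ U := by
    intro n z hz
    by_contra h
    have h0 : Metric.infDist z Uᶜ = 0 := Metric.infDist_zero_of_mem h
    have h1 := hz.2
    rw [Set.mem_setOf_eq, h0] at h1
    have h2 : (0:ℝ) < 1/(n+1) := by positivity
    linarith
  have hKmono : Monotone K := by
    intro p q hpq
    apply Set.inter_subset_inter
    · apply Metric.closedBall_subset_closedBall
      have : (p:ℝ) ≤ q := Nat.cast_le.2 hpq
      linarith
    · intro z hz
      rw [Set.mem_setOf_eq] at hz ⊢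
      refine le_trans ?_ hz
      have h1 : (0:ℝ) < p + 1 := by positivity
      have h2 : (p:ℝ) + 1 ≤ q + 1 := by
        have : (p:ℝ) ≤ q := Nat.cast_le.2 hpq
        linarith
      exact one_div_le_one_div_of_le h1 h2
  have hKcover : U ⊆ ⋃ n, K n := by
    intro z hz
    obtain ⟨ε, hε0, hεU⟩ := Metric.isOpen_iff.mp hUopen z hz
    have hcne : (Uᶜ : Set (EuclideanSpace ℝ (Fin 3))).Nonempty :=
      ⟨x, fun hxU => hxS (hUS hxU)⟩
    have hinf : ε ≤ Metric.infDist z Uᶜ := by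
      by_contra h
      push_neg at h
      obtain ⟨y, hy, hlt⟩ := (Metric.infDist_lt_iff hcne).mp h
      exact hy (hεU (by rwa [Metric.mem_ball, dist_comm]))
    obtain ⟨n, hn⟩ := exists_nat_ge (max (dist z x) (1/ε))
    refine Set.mem_iUnion.2 ⟨n, ⟨?_, ?_⟩⟩
    · rw [Metric.mem_closedBall]
      have := (le_max_left (dist z x) (1/ε)).trans hn
      linarith
    · rw [Set.mem_setOf_eq]
      have h1 : 1/ε ≤ n := (le_max_right _ _).trans hn
      have h2 : 1/(n+1:ℝ) ≤ ε := by
        rw [div_le_iff₀ (by positivity)]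
        rw [div_le_iff₀ hε0] at h1
        nlinarith
      exact h2.trans hinf
  have hKfin : ∀ n, ∫⁻ z in K n, ENNReal.ofReal (Φ z ^ 2) ≠ ⊤ := by
    intro n
    obtain ⟨Cb, hCb⟩ := (hKc n).exists_bound_of_continuousOn (hΦcont.mono (hKU n))
    have hle : ∫⁻ z in K n, ENNReal.ofReal (Φ z ^ 2) ≤ ENNReal.ofReal (Cb ^ 2) * volume (K n) := by
      rw [← setLIntegral_const]
      apply setLIntegral_mono' (hKc n).measurableSet
      intro z hz
      apply ENNReal.ofReal_le_ofReal
      have h1 := hCb z hz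
      rw [Real.norm_eq_abs] at h1
      nlinarith [abs_nonneg (Φ z), sq_abs (Φ z), neg_abs_le (Φ z), le_abs_self (Φ z)]
    exact ne_top_of_le_ne_top
      (ENNReal.mul_ne_top ENNReal.ofReal_ne_top (hKc n).measure_lt_top.ne) hle
  have hsup : (⨆ n, ∫⁻ z in K n, ENNReal.ofReal (Φ z ^ 2)) = ⊤ := by
    set f : ℕ → EuclideanSpace ℝ (Fin 3) → ℝ≥0∞ :=
      fun n => (K n).indicator (fun z => ENNReal.ofReal (Φ z ^ 2)) with hfdef
    have hfm : ∀ n, Measurable (f n) :=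
      fun n => ((hΦm.pow_const 2).ennreal_ofReal).indicator (hKc n).measurableSet
    have hfmono : Monotone f := fun p q hpq z =>
      Set.indicator_le_indicator_of_subset (hKmono hpq) (fun _ => zero_le) z
    have hfsup : ∀ z, (⨆ n, f n z) = U.indicator (fun z => ENNReal.ofReal (Φ z ^ 2)) z := by
      intro z
      by_cases hz : z ∈ U
      · obtain ⟨n, hn⟩ := Set.mem_iUnion.mp (hKcover hz)
        apply le_antisymm
        · apply iSup_le
          intro p
          exact Set.indicator_le_indicator_of_subset (hKU p) (fun _ => zero_le) z
        · rw [Set.indicator_of_mem hz]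
          refine le_trans ?_ (le_iSup _ n)
          rw [hfdef]
          simp only
          rw [Set.indicator_of_mem hn]
      · rw [Set.indicator_of_notMem hz]
        apply le_antisymm _ zero_le
        apply iSup_le
        intro p
        rw [hfdef]
        simp only
        rw [Set.indicator_of_notMem (fun hzp => hz (hKU p hzp))]
    calc (⨆ n, ∫⁻ z in K n, ENNReal.ofReal (Φ z ^ 2))
        = ⨆ n, ∫⁻ z, f n z := by
          apply iSup_congr
          intro n
          rw [hfdef]
          simp only
          rw [lintegral_indicator (hKc n).measurableSet]
      _ = ∫⁻ z, ⨆ n, f n z := (lintegral_iSup hfm hfmono).symm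
      _ = ∫⁻ z, U.indicator (fun z => ENNReal.ofReal (Φ z ^ 2)) z := by
          congr 1
          ext z
          exact hfsup z
      _ = ∫⁻ z in U, ENNReal.ofReal (Φ z ^ 2) := lintegral_indicator hUopen.measurableSet _
      _ = ⊤ := hUvol
  -- final argument
  rw [ENNReal.tendsto_nhds_top_iff_nat]
  intro N
  obtain ⟨nK, hnK⟩ : ∃ n, 2 * (N:ℝ≥0∞) + 3 < ∫⁻ z in K n, ENNReal.ofReal (Φ z ^ 2) := by
    apply lt_iSup_iff.mp
    rw [hsup]
    exact lt_top_iff_ne_top.2 (by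
      refine ENNReal.add_ne_top.2 ⟨ENNReal.mul_ne_top (by norm_num) (ENNReal.natCast_ne_top N), ?_⟩
      norm_num)
  set B : ℝ≥0∞ := ∫⁻ z in K nK, ENNReal.ofReal (Φ z ^ 2) with hBdef
  have hBfin : B ≠ ⊤ := hKfin nK
  have hKΩσ : K nK ⊆ Ω \ σ := by
    intro z hz
    have h1 := hKU nK hz
    exact ⟨(hUS h1).2, h1.2⟩
  have hev : ∀ᶠ n in atTop, ∫ z in K nK, (v n z - Φ z) ^ 2 < 1 :=
    (hconv _ hKΩσ (hKc nK)).eventually_lt_const one_pos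
  filter_upwards [hev] with n hn
  have hKS : K nK ⊆ S := fun z hz => hUS (hKU nK hz)
  set X : ℝ≥0∞ := ∫⁻ z in K nK, ENNReal.ofReal (v n z ^ 2) with hXdef
  set I : ℝ≥0∞ := ∫⁻ z in K nK, ENNReal.ofReal ((v n z - Φ z) ^ 2) with hIdef
  have hmono : X ≤ ∫⁻ z in S, ENNReal.ofReal (v n z ^ 2) := lintegral_mono_set hKS
  have hvm : Measurable fun z => ENNReal.ofReal (v n z ^ 2) :=
    ((hmeas n).pow_const 2).ennreal_ofReal
  have hvΦm : Measurable fun z => ENNReal.ofReal ((v n z - Φ z) ^ 2) :=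
    (((hmeas n).sub hΦm).pow_const 2).ennreal_ofReal
  suffices hNX : (N:ℝ≥0∞) < X from lt_of_lt_of_le hNX hmono
  by_cases hItop : I = ⊤
  · -- then X = ⊤
    have hpw2 : ∀ z, ENNReal.ofReal ((v n z - Φ z) ^ 2) ≤
        2 * ENNReal.ofReal (v n z ^ 2) + 2 * ENNReal.ofReal (Φ z ^ 2) := by
      intro z
      have hr : (v n z - Φ z) ^ 2 ≤ 2 * v n z ^ 2 + 2 * Φ z ^ 2 := by nlinarith [sq_nonneg (v n z + Φ z)]
      calc ENNReal.ofReal ((v n z - Φ z) ^ 2)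
          ≤ ENNReal.ofReal (2 * v n z ^ 2 + 2 * Φ z ^ 2) := ENNReal.ofReal_le_ofReal hr
        _ = 2 * ENNReal.ofReal (v n z ^ 2) + 2 * ENNReal.ofReal (Φ z ^ 2) := by
            rw [ENNReal.ofReal_add (by positivity) (by positivity),
              ENNReal.ofReal_mul (by norm_num), ENNReal.ofReal_mul (by norm_num),
              ENNReal.ofReal_ofNat]
    have hIle : I ≤ 2 * X + 2 * B := by
      calc I ≤ ∫⁻ z in K nK,
            (2 * ENNReal.ofReal (v n z ^ 2) + 2 * ENNReal.ofReal (Φ z ^ 2)) :=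
          lintegral_mono fun z => hpw2 z
        _ = 2 * X + 2 * B := by
            rw [lintegral_add_left (hvm.const_mul 2), lintegral_const_mul 2 hvm,
              lintegral_const_mul 2 ((hΦm.pow_const 2).ennreal_ofReal)]
    have hXtop : X = ⊤ := by
      by_contra hX'
      have h1 : 2 * X + 2 * B ≠ ⊤ := by
        refine ENNReal.add_ne_top.2 ⟨ENNReal.mul_ne_top (by norm_num) hX', ENNReal.mul_ne_top (by norm_num) hBfin⟩
      rw [hItop] at hIle
      exact h1 (top_unique hIle)
    rw [hXtop]
    exact ENNReal.natCast_lt_top N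
  · -- I finite: I ≤ 1 and B ≤ 2X + 2I
    have hIfin : I < ⊤ := lt_top_iff_ne_top.2 hItop
    have hint : Integrable (fun z => (v n z - Φ z) ^ 2) (volume.restrict (K nK)) := by
      refine ⟨(((hmeas n).sub hΦm).pow_const 2).aestronglyMeasurable, ?_⟩
      rw [hasFiniteIntegral_iff_ofReal (ae_of_all _ fun z => sq_nonneg _)]
      exact hIfin
    have hIeq : ENNReal.ofReal (∫ z in K nK, (v n z - Φ z) ^ 2) = I :=
      ofReal_integral_eq_lintegral_ofReal hint (ae_of_all _ fun z => sq_nonneg _)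
    have hI1 : I ≤ 1 := by
      rw [← hIeq]
      calc ENNReal.ofReal (∫ z in K nK, (v n z - Φ z) ^ 2)
          ≤ ENNReal.ofReal 1 := ENNReal.ofReal_le_ofReal hn.le
        _ = 1 := ENNReal.ofReal_one
    have hpw1 : ∀ z, ENNReal.ofReal (Φ z ^ 2) ≤
        2 * ENNReal.ofReal (v n z ^ 2) + 2 * ENNReal.ofReal ((v n z - Φ z) ^ 2) := by
      intro z
      have hr : Φ z ^ 2 ≤ 2 * v n z ^ 2 + 2 * (v n z - Φ z) ^ 2 := by nlinarith [sq_nonneg (2 * v n z - Φ z)]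
      calc ENNReal.ofReal (Φ z ^ 2)
          ≤ ENNReal.ofReal (2 * v n z ^ 2 + 2 * (v n z - Φ z) ^ 2) := ENNReal.ofReal_le_ofReal hr
        _ = 2 * ENNReal.ofReal (v n z ^ 2) + 2 * ENNReal.ofReal ((v n z - Φ z) ^ 2) := by
            rw [ENNReal.ofReal_add (by positivity) (by positivity),
              ENNReal.ofReal_mul (by norm_num), ENNReal.ofReal_mul (by norm_num),
              ENNReal.ofReal_ofNat]
    have hBle : B ≤ 2 * X + 2 * I := by
      calc B ≤ ∫⁻ z in K nK,
            (2 * ENNReal.ofReal (v n z ^ 2) + 2 * ENNReal.ofReal ((v n z - Φ z) ^ 2)) :=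
          lintegral_mono fun z => hpw1 z
        _ = 2 * X + 2 * I := by
            rw [lintegral_add_left (hvm.const_mul 2), lintegral_const_mul 2 hvm,
              lintegral_const_mul 2 hvΦm]
    have h2 : 2 * (N:ℝ≥0∞) + 3 < 2 * X + 2 := by
      refine lt_of_lt_of_le hnK (hBle.trans ?_)
      have : 2 * I ≤ 2 := by
        calc 2 * I ≤ 2 * 1 := by gcongr
          _ = 2 := mul_one 2
      exact add_le_add_right this (2 * X)
    by_contra hcon
    push_neg at hcon
    have h3 : 2 * X + 2 ≤ 2 * (N:ℝ≥0∞) + 2 := by gcongr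
    have h4 : 2 * (N:ℝ≥0∞) + 3 < 2 * (N:ℝ≥0∞) + 2 := lt_of_lt_of_le h2 h3
    rw [ENNReal.add_lt_add_iff_left (ENNReal.mul_ne_top (by norm_num) (ENNReal.natCast_ne_top N))] at h4
    norm_num at h4
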